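/- Let (S,A,P,r,γ) be a finite discounted MDP and let π, π' be policies. If Q^π and Q^{π'} satisfy F^π Q^π = Q^π and F^{π'} Q^{π'} = Q^{π'}, then ‖Q^π − Q^{π'}‖∞ ≤ (γ·|A|/(1−γ)²)·‖π − π'‖∞, where |A| is the cardinality of A and ‖π − π'‖∞ = max_{s,a} |π s a − π' s a|. -/

import Mathlib

lemma wsum_abs_le' {ι : Type*} [Fintype ι] (w f : ι → ℝ) (C : ℝ)
    (hw0 : ∀ i, 0 ≤ w i) (hw1 : ∑ i, w i = 1) (hf : ∀ i, |f i| ≤ C) :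
    |∑ i, w i * f i| ≤ C := by
  calc |∑ i, w i * f i| ≤ ∑ i, |w i * f i| := Finset.abs_sum_le_sum_abs _ _
    _ ≤ ∑ i, w i * C := by
        apply Finset.sum_le_sum; intro i _
        rw [abs_mul, abs_of_nonneg (hw0 i)]
        exact mul_le_mul_of_nonneg_left (hf i) (hw0 i)
    _ = C := by rw [← Finset.sum_mul, hw1, one_mul]

/-- Lipschitz continuity of the action value function in the policy:
`‖Q^π − Q^{π'}‖∞ ≤ γ|A|/(1-γ)² · ‖π − π'‖∞`. -/
theorem action_value_lipschitz_in_policy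
    {S A : Type*} [Fintype S] [Fintype A] [Nonempty S] [Nonempty A]
    (P : S → A → S → ℝ) (hP0 : ∀ s a s', 0 ≤ P s a s')
    (hP1 : ∀ s a, ∑ s', P s a s' = 1)
    (r : S → A → ℝ) (hr0 : ∀ s a, 0 ≤ r s a) (hr1 : ∀ s a, r s a ≤ 1)
    (γ : ℝ) (hγ0 : 0 ≤ γ) (hγ1 : γ < 1)
    (pol pol' : S → A → ℝ)
    (hpol0 : ∀ s a, 0 ≤ pol s a) (hpol1 : ∀ s, ∑ a, pol s a = 1)
    (hpol0' : ∀ s a, 0 ≤ pol' s a) (hpol1' : ∀ s, ∑ a, pol' s a = 1)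
    (Qpi Qpi' : S × A → ℝ)
    (hQpi : ∀ s a, r s a + γ * ∑ s', P s a s' * ∑ a', pol s' a' * Qpi (s', a')
      = Qpi (s, a))
    (hQpi' : ∀ s a, r s a + γ * ∑ s', P s a s' * ∑ a', pol' s' a' * Qpi' (s', a')
      = Qpi' (s, a)) :
    ‖(fun p : S × A => Qpi p - Qpi' p)‖
      ≤ γ * (Fintype.card A : ℝ) / (1 - γ) ^ 2 *
        ‖(fun p : S × A => pol p.1 p.2 - pol' p.1 p.2)‖ := by
  have h1γ : 0 < 1 - γ := by linarith
  set D := ‖(fun p : S × A => Qpi p - Qpi' p)‖ with hDdef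
  set E := ‖(fun p : S × A => pol p.1 p.2 - pol' p.1 p.2)‖ with hEdef
  have hD0 : 0 ≤ D := norm_nonneg _
  have hE0 : 0 ≤ E := norm_nonneg _
  have hEbd : ∀ s a, |pol s a - pol' s a| ≤ E := fun s a =>
    norm_le_pi_norm (fun p : S × A => pol p.1 p.2 - pol' p.1 p.2) (s, a)
  have hDbd : ∀ s a, |Qpi (s, a) - Qpi' (s, a)| ≤ D := fun s a =>
    norm_le_pi_norm (fun p : S × A => Qpi p - Qpi' p) (s, a)
  -- bound on ‖Qpi'‖
  set M := ‖Qpi'‖ with hMdef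
  have hM0 : 0 ≤ M := norm_nonneg _
  have hMbd : ∀ s a, |Qpi' (s, a)| ≤ M := fun s a => norm_le_pi_norm Qpi' (s, a)
  have hMkey : M ≤ 1 + γ * M := by
    rw [hMdef]
    apply pi_norm_le_iff_of_nonneg (by positivity) |>.2
    rintro ⟨s, a⟩
    rw [Real.norm_eq_abs, ← hQpi' s a]
    have h1 : |∑ s', P s a s' * ∑ a', pol' s' a' * Qpi' (s', a')| ≤ M := by
      apply wsum_abs_le' _ _ _ (hP0 s a) (hP1 s a)
      intro s'
      exact wsum_abs_le' _ _ _ (hpol0' s') (hpol1' s') (fun a' => hMbd s' a')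
    have h2 : |r s a| ≤ 1 := abs_le.2 ⟨by linarith [hr0 s a], hr1 s a⟩
    calc |r s a + γ * ∑ s', P s a s' * ∑ a', pol' s' a' * Qpi' (s', a')|
        ≤ |r s a| + |γ * ∑ s', P s a s' * ∑ a', pol' s' a' * Qpi' (s', a')| :=
          abs_add_le _ _
      _ ≤ 1 + γ * M := by
          rw [abs_mul, abs_of_nonneg hγ0]
          have := mul_le_mul_of_nonneg_left h1 hγ0
          linarith
  have hMle : M ≤ 1 / (1 - γ) := by
    rw [le_div_iff₀ h1γ]; nlinarith
  have hQ'bd : ∀ s a, |Qpi' (s, a)| ≤ 1 / (1 - γ) := fun s a =>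
    le_trans (hMbd s a) hMle
  -- main bound
  set cA := (Fintype.card A : ℝ) with hcA
  have hcA0 : 0 ≤ cA := Nat.cast_nonneg _
  have hDkey : D ≤ γ * (D + cA * E / (1 - γ)) := by
    rw [hDdef]
    apply pi_norm_le_iff_of_nonneg (by positivity) |>.2
    rintro ⟨s, a⟩
    show |Qpi (s, a) - Qpi' (s, a)| ≤ γ * (D + cA * E / (1 - γ))
    rw [← hQpi s a, ← hQpi' s a]
    have hdiff : r s a + γ * ∑ s', P s a s' * ∑ a', pol s' a' * Qpi (s', a')
        - (r s a + γ * ∑ s', P s a s' * ∑ a', pol' s' a' * Qpi' (s', a'))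
        = γ * ∑ s', P s a s' *
          ((∑ a', pol s' a' * (Qpi (s', a') - Qpi' (s', a'))) +
           (∑ a', (pol s' a' - pol' s' a') * Qpi' (s', a'))) := by
      have hs : ∀ s', (∑ a', pol s' a' * (Qpi (s', a') - Qpi' (s', a'))) +
          (∑ a', (pol s' a' - pol' s' a') * Qpi' (s', a'))
          = (∑ a', pol s' a' * Qpi (s', a')) - ∑ a', pol' s' a' * Qpi' (s', a') := by
        intro s'
        rw [← Finset.sum_add_distrib, ← Finset.sum_sub_distrib]
        apply Finset.sum_congr rfl
        intro a' _
        ring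
      have hkey : ∑ s', P s a s' *
          ((∑ a', pol s' a' * (Qpi (s', a') - Qpi' (s', a'))) +
           (∑ a', (pol s' a' - pol' s' a') * Qpi' (s', a')))
          = (∑ s', P s a s' * ∑ a', pol s' a' * Qpi (s', a'))
            - ∑ s', P s a s' * ∑ a', pol' s' a' * Qpi' (s', a') := by
        rw [← Finset.sum_sub_distrib]
        apply Finset.sum_congr rfl
        intro s' _
        rw [hs s']
        ring
      rw [hkey]
      ring
    rw [hdiff]
    have hinner : ∀ s', |(∑ a', pol s' a' * (Qpi (s', a') - Qpi' (s', a'))) +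
        (∑ a', (pol s' a' - pol' s' a') * Qpi' (s', a'))| ≤ D + cA * E / (1 - γ) := by
      intro s'
      have hA : |∑ a', pol s' a' * (Qpi (s', a') - Qpi' (s', a'))| ≤ D :=
        wsum_abs_le' _ _ _ (hpol0 s') (hpol1 s') (fun a' => hDbd s' a')
      have hB : |∑ a', (pol s' a' - pol' s' a') * Qpi' (s', a')| ≤ cA * E / (1 - γ) := by
        calc |∑ a', (pol s' a' - pol' s' a') * Qpi' (s', a')|
            ≤ ∑ a', |(pol s' a' - pol' s' a') * Qpi' (s', a')| :=
              Finset.abs_sum_le_sum_abs _ _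
          _ ≤ ∑ _a' : A, E * (1 / (1 - γ)) := by
              apply Finset.sum_le_sum
              intro a' _
              rw [abs_mul]
              exact mul_le_mul (hEbd s' a') (hQ'bd s' a') (abs_nonneg _) hE0
          _ = cA * E / (1 - γ) := by
              rw [Finset.sum_const, Finset.card_univ, nsmul_eq_mul]
              field_simp
              rw [hcA]; ring
      calc _ ≤ |∑ a', pol s' a' * (Qpi (s', a') - Qpi' (s', a'))| +
            |∑ a', (pol s' a' - pol' s' a') * Qpi' (s', a')| := abs_add_le _ _
        _ ≤ D + cA * E / (1 - γ) := add_le_add hA hB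
    have hout : |∑ s', P s a s' *
        ((∑ a', pol s' a' * (Qpi (s', a') - Qpi' (s', a'))) +
         (∑ a', (pol s' a' - pol' s' a') * Qpi' (s', a')))| ≤ D + cA * E / (1 - γ) :=
      wsum_abs_le' _ _ _ (hP0 s a) (hP1 s a) hinner
    rw [abs_mul, abs_of_nonneg hγ0]
    exact mul_le_mul_of_nonneg_left hout hγ0
  -- conclude
  rw [div_mul_eq_mul_div, le_div_iff₀ (by positivity)]
  have h := hDkey
  rw [mul_add] at h
  have h2 : D * (1 - γ) ≤ γ * (cA * E / (1 - γ)) := by linarith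
  have h3 : D * (1 - γ) * (1 - γ) ≤ γ * (cA * E) := by
    have h4 := mul_le_mul_of_nonneg_right h2 (le_of_lt h1γ)
    have heq : γ * (cA * E / (1 - γ)) * (1 - γ) = γ * (cA * E) := by
      field_simp
    rw [heq] at h4
    exact h4
  nlinarith [h3]
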